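/- Let K be an algebraically closed field of characteristic 0. The polynomial p = x·y − x − y − x²·y² ∈ K[x,y] is irreducible and satisfies the identity (x − y)·p = (1 − x − x³)·y² − x²·(1 − y − y³); in particular, ((x − y)/(x²y²))·p = (1 − x − x³)/x² − (1 − y − y³)/y², so p has a non-trivial rational multiple in K(x) + K(y). -/

import Mathlib

open MvPolynomial

noncomputable section

abbrev P2 (K : Type*) [Field K] := MvPolynomial (Fin 2) K

variable {K : Type*} [Field K]

def toX (u : Polynomial K) : P2 K := Polynomial.aeval (X 0) u

def toY (u : Polynomial K) : P2 K := Polynomial.aeval (X 1) u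

def embX (f : RatFunc K) : FractionRing (P2 K) :=
  algebraMap (P2 K) (FractionRing (P2 K)) (toX f.num) /
    algebraMap (P2 K) (FractionRing (P2 K)) (toX f.denom)

def embY (g : RatFunc K) : FractionRing (P2 K) :=
  algebraMap (P2 K) (FractionRing (P2 K)) (toY g.num) /
    algebraMap (P2 K) (FractionRing (P2 K)) (toY g.denom)

/-- The rational function `(1 − t − t³)/t²`. -/
def rEx (K : Type*) [Field K] : RatFunc K :=
  algebraMap (Polynomial K) (RatFunc K) (1 - Polynomial.X - Polynomial.X ^ 3) /
    algebraMap (Polynomial K) (RatFunc K) (Polynomial.X ^ 2)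

lemma aux_d_not_sq [CharZero K] (s : RatFunc K) :
    algebraMap (Polynomial K) (RatFunc K)
      ((Polynomial.X - 1) ^ 2 - 4 * Polynomial.X ^ 3) ≠ s ^ 2 := by
  set d : Polynomial K := (Polynomial.X - 1) ^ 2 - 4 * Polynomial.X ^ 3 with hd
  have hd3 : d.natDegree = 3 := by
    rw [hd]
    compute_degree!
  intro h
  have hd0 : d ≠ 0 := fun h0 => by simp [h0] at hd3
  have hden : s.denom ≠ 0 := s.denom_ne_zero
  have hmul : s * algebraMap _ _ s.denom = algebraMap _ _ s.num := by
    nth_rewrite 1 [← RatFunc.num_div_denom s]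
    exact div_mul_cancel₀ _ (RatFunc.algebraMap_ne_zero hden)
  have key : s.num ^ 2 = d * s.denom ^ 2 := by
    apply RatFunc.algebraMap_injective K
    rw [map_mul, map_pow, map_pow, h, ← mul_pow, hmul]
  have hnum : s.num ≠ 0 := by
    intro h0
    rw [h0] at key
    exact (mul_ne_zero hd0 (pow_ne_zero 2 hden)) (by simpa using key.symm)
  have e1 : (s.num ^ 2).natDegree = 2 * s.num.natDegree := by
    rw [Polynomial.natDegree_pow]
  have e2 : (d * s.denom ^ 2).natDegree = 3 + 2 * s.denom.natDegree := by
    rw [Polynomial.natDegree_mul hd0 (pow_ne_zero 2 hden), hd3, Polynomial.natDegree_pow]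
  rw [key, e2] at e1
  omega

lemma irred_q [CharZero K] :
    Irreducible (Polynomial.C (-(Polynomial.X ^ 2)) * Polynomial.X ^ 2
      + Polynomial.C (Polynomial.X - 1) * Polynomial.X
      + Polynomial.C (-Polynomial.X) : Polynomial (Polynomial K)) := by
  set q : Polynomial (Polynomial K) :=
    Polynomial.C (-(Polynomial.X ^ 2)) * Polynomial.X ^ 2
      + Polynomial.C (Polynomial.X - 1) * Polynomial.X
      + Polynomial.C (-Polynomial.X) with hq
  have hprim : q.IsPrimitive := by
    intro r hr
    rw [Polynomial.C_dvd_iff_dvd_coeff] at hr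
    have h0 : r ∣ -Polynomial.X := by
      have h := hr 0
      simp only [hq, Polynomial.coeff_add, Polynomial.coeff_C_mul, Polynomial.coeff_X_pow,
        Polynomial.coeff_X, Polynomial.coeff_C] at h
      norm_num at h
      exact (dvd_neg).mpr h
    have h1 : r ∣ (Polynomial.X - 1) := by
      have h := hr 1
      simp only [hq, Polynomial.coeff_add, Polynomial.coeff_C_mul, Polynomial.coeff_X_pow,
        Polynomial.coeff_X, Polynomial.coeff_C] at h
      norm_num at h
      exact h
    have h2 : r ∣ (-1 : Polynomial K) := by
      have h3 := dvd_add h1 h0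
      rwa [show (Polynomial.X - 1) + -Polynomial.X = (-1 : Polynomial K) by ring] at h3
    exact isUnit_of_dvd_unit h2 (by simp)
  apply hprim.irreducible_of_irreducible_map_of_injective (RatFunc.algebraMap_injective K)
  set φ := algebraMap (Polynomial K) (RatFunc K) with hφ
  have hmap : q.map φ = Polynomial.C (φ (-(Polynomial.X ^ 2))) * Polynomial.X ^ 2
      + Polynomial.C (φ (Polynomial.X - 1)) * Polynomial.X
      + Polynomial.C (φ (-Polynomial.X)) := by
    simp [hq]
  have ha : φ (-(Polynomial.X ^ 2)) ≠ 0 :=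
    RatFunc.algebraMap_ne_zero (by simp [Polynomial.X_ne_zero])
  have hdeg : (q.map φ).natDegree = 2 := by
    rw [hmap]
    compute_degree!
    exact RatFunc.algebraMap_ne_zero Polynomial.X_ne_zero
  rw [Polynomial.irreducible_iff_roots_eq_zero_of_degree_le_three (by omega) (by omega)]
  rw [Multiset.eq_zero_iff_forall_notMem]
  intro r hr
  have hq0 : q.map φ ≠ 0 := fun h => by simp [h] at hdeg
  rw [Polynomial.mem_roots hq0, Polynomial.IsRoot, hmap] at hr
  simp only [Polynomial.eval_add, Polynomial.eval_mul, Polynomial.eval_pow,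
    Polynomial.eval_C, Polynomial.eval_X] at hr
  have := quadratic_ne_zero_of_discrim_ne_sq
    (a := φ (-(Polynomial.X ^ 2))) (b := φ (Polynomial.X - 1)) (c := φ (-Polynomial.X))
    (fun s hs => by
      apply aux_d_not_sq s
      rw [← hs, discrim]
      push_cast [map_sub, map_mul, map_pow, map_neg, map_one, map_ofNat]
      ring) r
  apply this
  rw [← hr]
  ring

lemma irred_p [CharZero K] :
    Irreducible (X 0 * X 1 - X 0 - X 1 - X 0 ^ 2 * X 1 ^ 2 : MvPolynomial (Fin 2) K) := by
  let e1 : MvPolynomial (Fin 1) K ≃ₐ[K] Polynomial K :=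
    (MvPolynomial.finSuccEquiv K 0).trans
      (Polynomial.mapAlgEquiv (MvPolynomial.isEmptyAlgEquiv K (Fin 0)))
  let E : MvPolynomial (Fin 2) K ≃ₐ[K] Polynomial (Polynomial K) :=
    (MvPolynomial.finSuccEquiv K 1).trans (Polynomial.mapAlgEquiv e1)
  have hX0 : E (X 0) = Polynomial.X := by
    simp [E, e1, MvPolynomial.finSuccEquiv_X_zero, Polynomial.mapAlgEquiv]
  have h2 : e1 (X 0 : MvPolynomial (Fin 1) K) = Polynomial.X := by
    simp [e1, MvPolynomial.finSuccEquiv_X_zero, Polynomial.mapAlgEquiv]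
  have hX1 : E (X 1) = Polynomial.C Polynomial.X := by
    have h : (X 1 : MvPolynomial (Fin 2) K) = X (Fin.succ 0) := rfl
    have h1 : (MvPolynomial.finSuccEquiv K 1) (X 1 : MvPolynomial (Fin 2) K)
        = Polynomial.C (X 0) := by rw [h, MvPolynomial.finSuccEquiv_X_succ]
    have h3 : E (X 1) = (Polynomial.mapAlgEquiv e1)
        ((MvPolynomial.finSuccEquiv K 1) (X 1 : MvPolynomial (Fin 2) K)) := rfl
    rw [h3, h1]
    simp only [Polynomial.mapAlgEquiv, AlgEquiv.ofAlgHom_apply]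
    rw [Polynomial.coe_mapAlgHom, Polynomial.map_C]
    exact congrArg Polynomial.C h2
  have hE : E (X 0 * X 1 - X 0 - X 1 - X 0 ^ 2 * X 1 ^ 2) =
      Polynomial.C (-(Polynomial.X ^ 2)) * Polynomial.X ^ 2
        + Polynomial.C (Polynomial.X - 1) * Polynomial.X
        + Polynomial.C (-Polynomial.X) := by
    rw [map_sub, map_sub, map_sub, map_mul, map_mul, map_pow, map_pow, hX0, hX1]
    simp only [map_neg, Polynomial.C_neg, Polynomial.C_pow, Polynomial.C_sub, Polynomial.C_1]
    ring
  exact (MulEquiv.irreducible_iff E).mp (hE ▸ irred_q)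

lemma toX_ne_zero {u : Polynomial K} (hu : u ≠ 0) : toX u ≠ 0 := by
  let φ : P2 K →ₐ[K] Polynomial K := MvPolynomial.aeval ![Polynomial.X, 0]
  have hφ : φ (toX u) = u := by
    rw [toX, ← Polynomial.aeval_algHom_apply]
    have : φ (X 0) = Polynomial.X := by
      simp [φ, MvPolynomial.aeval_X, Matrix.cons_val_zero]
    rw [this, Polynomial.aeval_X_left_apply]
  intro h
  exact hu (by rw [← hφ, h, map_zero])

lemma toY_ne_zero {u : Polynomial K} (hu : u ≠ 0) : toY u ≠ 0 := by
  let φ : P2 K →ₐ[K] Polynomial K := MvPolynomial.aeval ![0, Polynomial.X]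
  have hφ : φ (toY u) = u := by
    rw [toY, ← Polynomial.aeval_algHom_apply]
    have : φ (X 1) = Polynomial.X := by
      simp [φ, MvPolynomial.aeval_X, Matrix.cons_val_one, Matrix.head_cons]
    rw [this, Polynomial.aeval_X_left_apply]
  intro h
  exact hu (by rw [← hφ, h, map_zero])

lemma embX_div (p q : Polynomial K) (hq : q ≠ 0) :
    embX (algebraMap (Polynomial K) (RatFunc K) p / algebraMap (Polynomial K) (RatFunc K) q)
      = algebraMap (P2 K) (FractionRing (P2 K)) (toX p)
        / algebraMap (P2 K) (FractionRing (P2 K)) (toX q) := by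
  set f := algebraMap (Polynomial K) (RatFunc K) p / algebraMap (Polynomial K) (RatFunc K) q
    with hf
  have key : p * f.denom = f.num * q := by
    apply RatFunc.algebraMap_injective K
    rw [map_mul, map_mul,
      ← div_eq_div_iff (RatFunc.algebraMap_ne_zero hq)
        (RatFunc.algebraMap_ne_zero f.denom_ne_zero),
      RatFunc.num_div_denom]
  have key2 : toX f.num * toX q = toX p * toX f.denom := by
    have h := congrArg (Polynomial.aeval (X 0 : P2 K)) key
    simpa only [toX, map_mul] using h.symm
  have hA1 : algebraMap (P2 K) (FractionRing (P2 K)) (toX f.denom) ≠ 0 := by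
    rw [Ne, IsFractionRing.to_map_eq_zero_iff]
    exact toX_ne_zero f.denom_ne_zero
  have hA2 : algebraMap (P2 K) (FractionRing (P2 K)) (toX q) ≠ 0 := by
    rw [Ne, IsFractionRing.to_map_eq_zero_iff]
    exact toX_ne_zero hq
  rw [embX, div_eq_div_iff hA1 hA2, ← map_mul, ← map_mul]
  exact congrArg _ key2

lemma embY_div (p q : Polynomial K) (hq : q ≠ 0) :
    embY (algebraMap (Polynomial K) (RatFunc K) p / algebraMap (Polynomial K) (RatFunc K) q)
      = algebraMap (P2 K) (FractionRing (P2 K)) (toY p)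
        / algebraMap (P2 K) (FractionRing (P2 K)) (toY q) := by
  set f := algebraMap (Polynomial K) (RatFunc K) p / algebraMap (Polynomial K) (RatFunc K) q
    with hf
  have key : p * f.denom = f.num * q := by
    apply RatFunc.algebraMap_injective K
    rw [map_mul, map_mul,
      ← div_eq_div_iff (RatFunc.algebraMap_ne_zero hq)
        (RatFunc.algebraMap_ne_zero f.denom_ne_zero),
      RatFunc.num_div_denom]
  have key2 : toY f.num * toY q = toY p * toY f.denom := by
    have h := congrArg (Polynomial.aeval (X 1 : P2 K)) key
    simpa only [toY, map_mul] using h.symm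
  have hA1 : algebraMap (P2 K) (FractionRing (P2 K)) (toY f.denom) ≠ 0 := by
    rw [Ne, IsFractionRing.to_map_eq_zero_iff]
    exact toY_ne_zero f.denom_ne_zero
  have hA2 : algebraMap (P2 K) (FractionRing (P2 K)) (toY q) ≠ 0 := by
    rw [Ne, IsFractionRing.to_map_eq_zero_iff]
    exact toY_ne_zero hq
  rw [embY, div_eq_div_iff hA1 hA2, ← map_mul, ← map_mul]
  exact congrArg _ key2

/-- The polynomial `p = xy − x − y − x²y²` is irreducible, satisfies
`(x − y)·p = (1 − x − x³)·y² − x²·(1 − y − y³)`, and consequently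
`((x − y)/(x²y²))·p = (1 − x − x³)/x² − (1 − y − y³)/y²`, a nonzero element of
`K(x) + K(y)`; so `p` has a non-trivial rational multiple in `K(x) + K(y)`. -/
theorem statement19 [IsAlgClosed K] [CharZero K] :
    Irreducible (X 0 * X 1 - X 0 - X 1 - X 0 ^ 2 * X 1 ^ 2 : P2 K) ∧
    ((X 0 - X 1) * (X 0 * X 1 - X 0 - X 1 - X 0 ^ 2 * X 1 ^ 2) : P2 K) =
      (1 - X 0 - X 0 ^ 3) * X 1 ^ 2 - X 0 ^ 2 * (1 - X 1 - X 1 ^ 3) ∧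
    (algebraMap (P2 K) (FractionRing (P2 K)) (X 0 - X 1) /
        algebraMap (P2 K) (FractionRing (P2 K)) (X 0 ^ 2 * X 1 ^ 2)) *
      algebraMap (P2 K) (FractionRing (P2 K))
        (X 0 * X 1 - X 0 - X 1 - X 0 ^ 2 * X 1 ^ 2) =
      embX (rEx K) - embY (rEx K) ∧
    (algebraMap (P2 K) (FractionRing (P2 K)) (X 0 - X 1) /
        algebraMap (P2 K) (FractionRing (P2 K)) (X 0 ^ 2 * X 1 ^ 2)) ≠ 0 := by
  set A := algebraMap (P2 K) (FractionRing (P2 K)) with hA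
  have hAinj : ∀ {u : P2 K}, u ≠ 0 → A u ≠ 0 := fun hu => by
    rw [hA, Ne, IsFractionRing.to_map_eq_zero_iff]; exact hu
  have hX0 : (X 0 : P2 K) ≠ 0 := MvPolynomial.X_ne_zero 0
  have hX1 : (X 1 : P2 K) ≠ 0 := MvPolynomial.X_ne_zero 1
  have hx2 : A (X 0 ^ 2) ≠ 0 := hAinj (pow_ne_zero 2 hX0)
  have hy2 : A (X 1 ^ 2) ≠ 0 := hAinj (pow_ne_zero 2 hX1)
  have hxy2 : A (X 0 ^ 2 * X 1 ^ 2) ≠ 0 :=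
    hAinj (mul_ne_zero (pow_ne_zero 2 hX0) (pow_ne_zero 2 hX1))
  refine ⟨irred_p, by ring, ?_, ?_⟩
  · rw [rEx, embX_div _ _ (pow_ne_zero 2 Polynomial.X_ne_zero),
      embY_div _ _ (pow_ne_zero 2 Polynomial.X_ne_zero)]
    have t1 : toX (1 - Polynomial.X - Polynomial.X ^ 3 : Polynomial K)
        = 1 - X 0 - X 0 ^ 3 := by simp [toX]
    have t2 : toX (Polynomial.X ^ 2 : Polynomial K) = X 0 ^ 2 := by simp [toX]
    have t3 : toY (1 - Polynomial.X - Polynomial.X ^ 3 : Polynomial K)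
        = 1 - X 1 - X 1 ^ 3 := by simp [toY]
    have t4 : toY (Polynomial.X ^ 2 : Polynomial K) = X 1 ^ 2 := by simp [toY]
    rw [t1, t2, t3, t4, div_mul_eq_mul_div, div_sub_div _ _ hx2 hy2,
      div_eq_div_iff hxy2 (mul_ne_zero hx2 hy2)]
    simp only [← hA, ← map_mul, ← map_sub]
    exact congrArg A (by ring)
  · apply div_ne_zero _ hxy2
    apply hAinj
    rw [sub_ne_zero]
    intro h
    have := MvPolynomial.X_injective h
    simp [Fin.ext_iff] at this
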